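/- Let Γ be a profinite group and let 0 → V' → V → V'' → 0 be a Γ-equivariant exact sequence of nonarchimedean Banach Γ-modules, where Γ acts by isometries, V' → V is an isometric embedding with closed image, and V'' carries the quotient norm. Suppose the quotient map V → V'' admits a bounded (not necessarily Γ-equivariant) linear section s of operator norm at most K ≥ 1, and suppose the continuous cochain complexes C^•(Γ, V') and C^•(Γ, V'') are uniformly strict exact with constants c' ≥ 1 and c'' ≥ 1 respectively. Then C^•(Γ, V) is uniformly strict exact with constant c' K c''. -/

import Mathlib

open scoped NNReal ENNReal

universe u v w w'

/-- Inhomogeneous continuous-cochain differential for a group `Γ` acting (via `act`) on an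
abelian group `N`: the usual group-cohomology differential on `C^n(Γ, N)`. -/
def cochainD {Γ N : Type*} [Group Γ] [AddCommGroup N]
    (act : Γ → N → N) (n : ℕ) (f : (Fin n → Γ) → N) :
    (Fin (n + 1) → Γ) → N :=
  fun g => act (g 0) (f fun i => g i.succ) +
    ∑ j : Fin (n + 1), ((-1 : ℤ) ^ ((j : ℕ) + 1)) • f (Fin.contractNth j (· * ·) g)

/-- The supremum norm of a cochain, valued in `ℝ≥0∞`. -/
noncomputable def supNorm {X M : Type*} [SeminormedAddCommGroup M] (f : X → M) : ℝ≥0∞ :=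
  ⨆ x, (‖f x‖₊ : ℝ≥0∞)

section AuxAlg

variable {Γ : Type*} [Group Γ]

lemma cochainD_comm {M N : Type*} [AddCommGroup M] [AddCommGroup N]
    (φ : M →+ N) (actM : Γ → M → M) (actN : Γ → N → N)
    (hcomm : ∀ γ x, φ (actM γ x) = actN γ (φ x)) (n : ℕ) (f : (Fin n → Γ) → M) :
    (fun g => φ (cochainD actM n f g)) = cochainD actN n (fun g => φ (f g)) := by
  funext g
  simp only [cochainD, map_add, map_sum, map_zsmul, hcomm]

lemma cochainD_add {N : Type*} [AddCommGroup N] (act : Γ → N → N)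
    (hadd : ∀ γ x y, act γ (x + y) = act γ x + act γ y) (n : ℕ)
    (f f' : (Fin n → Γ) → N) :
    cochainD act n (fun g => f g + f' g) = fun g => cochainD act n f g + cochainD act n f' g := by
  funext g
  simp only [cochainD, hadd, smul_add, Finset.sum_add_distrib, add_add_add_comm]

lemma cochainD_sub {N : Type*} [AddCommGroup N] (act : Γ → N → N)
    (hsub : ∀ γ x y, act γ (x - y) = act γ x - act γ y) (n : ℕ)
    (f f' : (Fin n → Γ) → N) :
    cochainD act n (fun g => f g - f' g) = fun g => cochainD act n f g - cochainD act n f' g := by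
  funext g
  simp only [cochainD, hsub, smul_sub, Finset.sum_sub_distrib, add_sub_add_comm]

lemma contractNth_comp {α β : Type*} (h : α → β) (opα : α → α → α) (opβ : β → β → β)
    (hop : ∀ a b, h (opα a b) = opβ (h a) (h b)) {n : ℕ} (j : Fin (n + 1))
    (g : Fin (n + 1) → α) (i : Fin n) :
    h (Fin.contractNth j opα g i) = Fin.contractNth j opβ (fun i => h (g i)) i := by
  unfold Fin.contractNth
  split_ifs <;> simp [hop]

end AuxAlg

lemma cochainD_sq_aux {k G : Type u} [CommRing k] [Group G] (A : Rep.{u} k G)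
    (hsmul : ∀ (m : ℤ) (x : A), (m : k) • x = m • x)
    (n : ℕ) (f : (Fin n → G) → A) :
    cochainD (fun γ (v : A) => A.ρ γ v) (n + 1) (cochainD (fun γ (v : A) => A.ρ γ v) n f) = 0 := by
  have h0 : ∀ (m : ℕ) (f : (Fin m → G) → A),
      cochainD (fun γ (v : A) => A.ρ γ v) m f = (inhomogeneousCochains.d A m).hom f := by
    intro m f
    funext g
    simp only [cochainD, inhomogeneousCochains.d_hom_apply]
    congr 1
    refine Finset.sum_congr rfl fun j _ => ?_
    rw [← hsmul]
    push_cast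
    ring_nf
  have key := groupCohomology.inhomogeneousCochains.d_comp_d (A := A) (n := n)
  have key2 := congrArg (fun φ => ModuleCat.Hom.hom φ f) key
  rw [h0, h0]
  simpa using key2

lemma cochainD_ulift {Γ : Type u} {V : Type v} [Group Γ] [AddCommGroup V]
    (act : Γ → V → V) (m : ℕ) (f : (Fin m → Γ) → V)
    (g : Fin (m + 1) → ULift.{w} Γ) :
    cochainD (fun (γ : ULift.{w} Γ) (x : ULift.{w'} V) => ULift.up (act γ.down x.down)) m
      (fun h => ULift.up (f fun i => (h i).down)) g
      = ULift.up (cochainD act m f fun i => (g i).down) := by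
  have hmul : ∀ a b : ULift.{w} Γ, (a * b).down = a.down * b.down := fun _ _ => rfl
  apply ULift.down_injective
  have hdown : ∀ x : ULift.{w'} V, x.down = (AddEquiv.ulift : ULift.{w'} V ≃+ V) x :=
    fun _ => rfl
  simp only [cochainD, hdown, map_add, map_sum, map_zsmul]
  congr 1
  refine Finset.sum_congr rfl fun j _ => ?_
  congr 1
  show f (fun i => (Fin.contractNth j (· * ·) g i).down) = _
  congr 1
  funext i
  exact contractNth_comp ULift.down (· * ·) (· * ·) hmul j g i

lemma cochainD_sq {Γ : Type u} {V : Type v} [Group Γ] [AddCommGroup V]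
    (ρ : Γ →* Multiplicative (AddAut V)) (n : ℕ) (f : (Fin n → Γ) → V) :
    cochainD (fun γ v => ρ γ v) (n + 1) (cochainD (fun γ v => ρ γ v) n f) = 0 := by
  let k : Type (max u v) := ULift.{max u v} ℤ
  let G : Type (max u v) := ULift.{max u v} Γ
  let M : Type (max u v) := ULift.{max u v} V
  let act' : G → M → M := fun γ x => ULift.up (ρ γ.down x.down)
  let r : Representation k G M :=
    { toFun := fun γ =>
        { toFun := fun x => act' γ x
          map_add' := fun x y => by
            apply ULift.down_injective
            have h1 : (x + y).down = x.down + y.down := rfl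
            show ρ γ.down ((x + y).down) = _
            rw [h1, map_add]
            rfl
          map_smul' := fun c x => by
            apply ULift.down_injective
            show (ρ γ.down ((c • x).down)) = (c • ULift.up (ρ γ.down x.down)).down
            have h1 : (c • x).down = c.down • x.down := rfl
            have h2 : ∀ y : M, (c • y).down = c.down • y.down := fun _ => rfl
            rw [h1, h2, map_zsmul] }
      map_one' := by
        apply LinearMap.ext
        intro x
        apply ULift.down_injective
        show ρ ((1 : G).down) x.down = x.down
        have : (1 : G).down = 1 := rfl
        rw [this, map_one]
        rfl
      map_mul' := fun γ δ => by
        apply LinearMap.ext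
        intro x
        apply ULift.down_injective
        show ρ ((γ * δ).down) x.down = _
        have : (γ * δ).down = γ.down * δ.down := rfl
        rw [this, map_mul]
        rfl }
  let A : Rep k G := Rep.of r
  have hsmulM : ∀ (m : ℤ) (x : A), ((m : k)) • x = m • x := fun m x => rfl
  have hsq := cochainD_sq_aux A hsmulM n (fun h => ULift.up (f fun i => (h i).down))
  have hact : (fun γ (v : A) => A.ρ γ v) = act' := rfl
  rw [hact] at hsq
  set D := cochainD (fun γ v => ρ γ v) with hD
  have hmid : cochainD act' n (fun h => ULift.up (f fun i => (h i).down))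
      = fun h => ULift.up (D n f fun i => (h i).down) :=
    funext fun h => cochainD_ulift (fun γ v => ρ γ v) n f h
  rw [hmid] at hsq
  funext g
  let g' : Fin (n + 2) → G := fun i => ULift.up (g i)
  have b := cochainD_ulift (fun γ v => ρ γ v) (n + 1) (D n f) g'
  have h3 : ULift.up (D (n + 1) (D n f) fun i => (g' i).down) = (0 : M) :=
    b.symm.trans (congrFun hsq g')
  exact congrArg ULift.down h3

section Norms

variable {V : Type*} [SeminormedAddCommGroup V]

lemma nnnorm_add_le_max (hna : ∀ x y : V, ‖x + y‖ ≤ max ‖x‖ ‖y‖) (x y : V) :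
    (‖x + y‖₊ : ℝ≥0∞) ≤ max (‖x‖₊ : ℝ≥0∞) (‖y‖₊ : ℝ≥0∞) := by
  have h : ‖x + y‖₊ ≤ max ‖x‖₊ ‖y‖₊ := by
    rw [← NNReal.coe_le_coe]
    push_cast
    simpa using hna x y
  calc (‖x + y‖₊ : ℝ≥0∞) ≤ ((max ‖x‖₊ ‖y‖₊ : ℝ≥0) : ℝ≥0∞) := by exact_mod_cast h
    _ = _ := by simp [max_def]; split_ifs <;> simp_all [ENNReal.coe_le_coe]

lemma nnnorm_sum_le_of_le' (hna : ∀ x y : V, ‖x + y‖ ≤ max ‖x‖ ‖y‖)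
    {ι : Type*} (s : Finset ι) (a : ι → V) (t : ℝ≥0∞)
    (h : ∀ i ∈ s, (‖a i‖₊ : ℝ≥0∞) ≤ t) : (‖∑ i ∈ s, a i‖₊ : ℝ≥0∞) ≤ t := by
  classical
  induction s using Finset.cons_induction with
  | empty => simp
  | cons i s hi ih =>
    rw [Finset.sum_cons]
    refine le_trans (nnnorm_add_le_max hna _ _) (max_le (h i (Finset.mem_cons_self _ _)) ?_)
    exact ih fun j hj => h j (Finset.mem_cons_of_mem hj)

lemma nnnorm_zsmul_pm (k : ℕ) (x : V) : ‖((-1 : ℤ) ^ k) • x‖₊ = ‖x‖₊ := by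
  rcases Nat.even_or_odd k with he | ho
  · rw [he.neg_one_pow, one_smul]
  · rw [ho.neg_one_pow, neg_smul, one_smul, nnnorm_neg]

lemma le_supNorm {X : Type*} (f : X → V) (x : X) : (‖f x‖₊ : ℝ≥0∞) ≤ supNorm f :=
  le_iSup (fun x => (‖f x‖₊ : ℝ≥0∞)) x

lemma supNorm_cochainD_le {Γ : Type*} [Group Γ]
    (hna : ∀ x y : V, ‖x + y‖ ≤ max ‖x‖ ‖y‖)
    (act : Γ → V → V) (hiso : ∀ γ v, ‖act γ v‖ = ‖v‖)
    (n : ℕ) (f : (Fin n → Γ) → V) :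
    supNorm (cochainD act n f) ≤ supNorm f := by
  refine iSup_le fun g => ?_
  refine le_trans (nnnorm_add_le_max hna _ _) (max_le ?_ ?_)
  · have h : ‖act (g 0) (f fun i => g i.succ)‖₊ = ‖f fun i => g i.succ‖₊ := by
      ext; exact hiso _ _
    rw [h]
    exact le_supNorm f _
  · refine nnnorm_sum_le_of_le' hna _ _ _ fun j _ => ?_
    rw [nnnorm_zsmul_pm]
    exact le_supNorm f _

end Norms

lemma continuous_cochainD {Γ W : Type*} [Group Γ] [TopologicalSpace Γ] [IsTopologicalGroup Γ]
    [SeminormedAddCommGroup W] (act : Γ → W → W)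
    (hact : Continuous fun p : Γ × W => act p.1 p.2)
    (n : ℕ) (f : (Fin n → Γ) → W) (hf : Continuous f) :
    Continuous (cochainD act n f) := by
  unfold cochainD
  have h1 : Continuous fun g : Fin (n + 1) → Γ => act (g 0) (f fun i => g i.succ) := by
    have hc : Continuous fun g : Fin (n + 1) → Γ =>
        ((g 0, f fun i => g i.succ) : Γ × W) :=
      (continuous_apply (0 : Fin (n + 1))).prodMk
        (hf.comp (continuous_pi fun i => continuous_apply i.succ))
    exact hact.comp hc
  have h2 : Continuous fun g : Fin (n + 1) → Γ =>
      ∑ j : Fin (n + 1), ((-1 : ℤ) ^ ((j : ℕ) + 1)) • f (Fin.contractNth j (· * ·) g) := by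
    refine continuous_finset_sum _ fun j _ => Continuous.zsmul ?_ _
    refine hf.comp (continuous_pi fun i => ?_)
    unfold Fin.contractNth
    split_ifs
    exacts [continuous_apply _, (continuous_apply _).mul (continuous_apply _), continuous_apply _]
  exact h1.add h2

/-- Let `0 → V' → V → V'' → 0` be a `Γ`-equivariant exact sequence of nonarchimedean Banach
`Γ`-modules, with `Γ` profinite acting continuously by isometries, `V' = S` a closed subgroup
of `V` with the induced norm, and `V'' = V ⧸ S` with the quotient norm.  Suppose the quotient
map admits a bounded additive section `s` with `‖s q‖ ≤ K ‖q‖` (`K ≥ 1`), and that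
`C^•(Γ, V')` and `C^•(Γ, V'')` are uniformly strict exact with constants `c' ≥ 1` and
`c'' ≥ 1` (including vanishing of `H^0`).  Then `C^•(Γ, V)` is uniformly strict exact with
constant `c' K c''`. -/
theorem stmt_8 {Γ V : Type*} [Group Γ] [TopologicalSpace Γ] [IsTopologicalGroup Γ]
    [CompactSpace Γ] [T2Space Γ] [TotallyDisconnectedSpace Γ]
    [NormedAddCommGroup V] [CompleteSpace V]
    (hna : ∀ x y : V, ‖x + y‖ ≤ max ‖x‖ ‖y‖)
    (ρ : Γ →* Multiplicative (AddAut V))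
    (hρiso : ∀ (γ : Γ) (v : V), ‖ρ γ v‖ = ‖v‖)
    (hρcont : Continuous fun p : Γ × V => ρ p.1 p.2)
    (S : AddSubgroup V) (hSclosed : IsClosed (S : Set V))
    (actS : Γ → S → S)
    (hactS : ∀ (γ : Γ) (x : S), (actS γ x : V) = ρ γ (x : V))
    (actQ : Γ → V ⧸ S → V ⧸ S)
    (hactQ : ∀ (γ : Γ) (v : V),
      actQ γ (QuotientAddGroup.mk v) = QuotientAddGroup.mk (ρ γ v))
    (K : ℝ≥0) (hK : 1 ≤ K)
    (s : V ⧸ S → V) (hadd : ∀ x y, s (x + y) = s x + s y)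
    (hsec : ∀ q : V ⧸ S, (QuotientAddGroup.mk (s q) : V ⧸ S) = q)
    (hbd : ∀ q : V ⧸ S, ‖s q‖ ≤ (K : ℝ) * ‖q‖)
    (c' c'' : ℝ≥0) (hc' : 1 ≤ c') (hc'' : 1 ≤ c'')
    (hexactS0 : ∀ F : (Fin 0 → Γ) → S, Continuous F → cochainD actS 0 F = 0 → F = 0)
    (hexactS : ∀ (n : ℕ) (F : (Fin (n + 1) → Γ) → S), Continuous F →
      cochainD actS (n + 1) F = 0 →
      ∃ G : (Fin n → Γ) → S, Continuous G ∧ cochainD actS n G = F ∧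
        supNorm G ≤ (c' : ℝ≥0∞) * supNorm F)
    (hexactQ0 : ∀ F : (Fin 0 → Γ) → V ⧸ S, Continuous F → cochainD actQ 0 F = 0 → F = 0)
    (hexactQ : ∀ (n : ℕ) (F : (Fin (n + 1) → Γ) → V ⧸ S), Continuous F →
      cochainD actQ (n + 1) F = 0 →
      ∃ G : (Fin n → Γ) → V ⧸ S, Continuous G ∧ cochainD actQ n G = F ∧
        supNorm G ≤ (c'' : ℝ≥0∞) * supNorm F) :
    (∀ F : (Fin 0 → Γ) → V, Continuous F →
      cochainD (fun γ v => ρ γ v) 0 F = 0 → F = 0) ∧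
    (∀ (n : ℕ) (F : (Fin (n + 1) → Γ) → V), Continuous F →
      cochainD (fun γ v => ρ γ v) (n + 1) F = 0 →
      ∃ G : (Fin n → Γ) → V, Continuous G ∧ cochainD (fun γ v => ρ γ v) n G = F ∧
        supNorm G ≤ ((c' * K * c'' : ℝ≥0) : ℝ≥0∞) * supNorm F) := by
  -- notation
  set act : Γ → V → V := fun γ v => ρ γ v with hact
  have haddρ : ∀ γ x y, act γ (x + y) = act γ x + act γ y := fun γ x y => map_add (Multiplicative.toAdd (ρ γ)) x y
  have hsubρ : ∀ γ x y, act γ (x - y) = act γ x - act γ y := fun γ x y => map_sub (Multiplicative.toAdd (ρ γ)) x y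
  -- the quotient map as an `AddMonoidHom`, and basic facts
  have hmk : ∀ v : V, QuotientAddGroup.mk' S v = (QuotientAddGroup.mk v : V ⧸ S) :=
    fun _ => rfl
  have hcommQ : ∀ γ v, QuotientAddGroup.mk' S (act γ v)
      = actQ γ (QuotientAddGroup.mk' S v) := by
    intro γ v
    rw [hmk, hmk, hactQ]
  have hcommS : ∀ (γ : Γ) (x : S), S.subtype (actS γ x) = act γ (S.subtype x) := hactS
  have hmkcont : Continuous fun v : V => (QuotientAddGroup.mk v : V ⧸ S) := by
    refine (LipschitzWith.of_dist_le_mul (K := 1) fun x y => ?_).continuous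
    rw [dist_eq_norm, dist_eq_norm, NNReal.coe_one, one_mul]
    have heq : ((x : V ⧸ S) - (y : V ⧸ S)) = ((x - y : V) : V ⧸ S) := by
      rw [← hmk, ← hmk, ← hmk, map_sub]
    rw [heq]
    exact QuotientAddGroup.norm_mk_le_norm (S := S) (m := x - y)
  -- the section is Lipschitz
  have hs0 : s 0 = 0 := by
    have h := hadd 0 0
    rw [add_zero] at h
    exact (left_eq_add.mp h)
  have hssub : ∀ x y, s (x - y) = s x - s y := by
    intro x y
    have := (AddMonoidHom.mk' s hadd).map_sub x y
    simpa using this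
  have hscont : Continuous s := by
    refine (LipschitzWith.of_dist_le_mul (K := K) fun x y => ?_).continuous
    rw [dist_eq_norm, dist_eq_norm, ← hssub]
    exact hbd (x - y)
  have hbd' : ∀ q, (‖s q‖₊ : ℝ≥0∞) ≤ (K : ℝ≥0∞) * ‖q‖₊ := by
    intro q
    have h : ‖s q‖₊ ≤ K * ‖q‖₊ := by
      rw [← NNReal.coe_le_coe]
      push_cast
      exact hbd q
    exact_mod_cast h
  have hmkle : ∀ v : V, (‖(QuotientAddGroup.mk v : V ⧸ S)‖₊ : ℝ≥0∞) ≤ (‖v‖₊ : ℝ≥0∞) := by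
    intro v
    have h : ‖(QuotientAddGroup.mk v : V ⧸ S)‖ ≤ ‖v‖ := QuotientAddGroup.norm_mk_le_norm (S := S) (m := v)
    have h' : ‖(QuotientAddGroup.mk v : V ⧸ S)‖₊ ≤ ‖v‖₊ := h
    exact_mod_cast h'
  constructor
  · -- vanishing of H^0
    intro F hF hdF
    have hQ : (fun g : Fin 0 → Γ => (QuotientAddGroup.mk (F g) : V ⧸ S)) = 0 := by
      refine hexactQ0 _ (hmkcont.comp hF) ?_
      have h := cochainD_comm (QuotientAddGroup.mk' S) act actQ hcommQ 0 F
      rw [hdF] at h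
      have h2 : (fun g : Fin 1 → Γ => QuotientAddGroup.mk' S ((0 : (Fin 1 → Γ) → V) g)) = 0 := by
        funext g
        simp
      rw [h2] at h
      exact h.symm
    have hmem : ∀ g, F g ∈ S := by
      intro g
      have := congrFun hQ g
      exact (QuotientAddGroup.eq_zero_iff (F g)).mp this
    set FS : (Fin 0 → Γ) → S := fun g => ⟨F g, hmem g⟩ with hFS
    have hFScont : Continuous FS := hF.subtype_mk _
    have hFSd : cochainD actS 0 FS = 0 := by
      funext g
      have h := congrFun (cochainD_comm S.subtype actS act hcommS 0 FS) g
      have h2 : (fun g : Fin 0 → Γ => S.subtype (FS g)) = F := rfl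
      rw [h2, hdF] at h
      exact Subtype.ext (by simpa using h)
    have := hexactS0 FS hFScont hFSd
    funext g
    have h := congrFun this g
    have h2 : F g = (FS g : V) := rfl
    rw [h2, h]
    rfl
  · -- the inductive dévissage step
    intro n F hF hdF
    set T := supNorm F with hT
    -- push to the quotient
    set Fb : (Fin (n + 1) → Γ) → V ⧸ S := fun g => QuotientAddGroup.mk (F g) with hFb
    have hFbcont : Continuous Fb := hmkcont.comp hF
    have hFbd : cochainD actQ (n + 1) Fb = 0 := by
      have h := cochainD_comm (QuotientAddGroup.mk' S) act actQ hcommQ (n + 1) F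
      rw [hdF] at h
      have h2 : (fun g : Fin (n + 2) → Γ =>
          QuotientAddGroup.mk' S ((0 : (Fin (n + 2) → Γ) → V) g)) = 0 := by
        funext g
        simp
      rw [h2] at h
      exact h.symm
    obtain ⟨Gb, hGbcont, hGbd, hGbnorm⟩ := hexactQ n Fb hFbcont hFbd
    -- lift via the section
    set G₁ : (Fin n → Γ) → V := fun g => s (Gb g) with hG₁
    have hG₁cont : Continuous G₁ := hscont.comp hGbcont
    have hmkG₁ : (fun g => QuotientAddGroup.mk' S (G₁ g)) = Gb := by
      funext g
      rw [hmk]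
      exact hsec (Gb g)
    set dG₁ : (Fin (n + 1) → Γ) → V := cochainD act n G₁ with hdG₁
    have hdG₁cont : Continuous dG₁ := continuous_cochainD act hρcont n G₁ hG₁cont
    have hmkdG₁ : (fun g => QuotientAddGroup.mk' S (dG₁ g)) = Fb := by
      have h := cochainD_comm (QuotientAddGroup.mk' S) act actQ hcommQ n G₁
      rw [hmkG₁] at h
      rw [hdG₁, h, hGbd]
    -- the error term lands in S
    have hmem : ∀ g, F g - dG₁ g ∈ S := by
      intro g
      have h1 : QuotientAddGroup.mk' S (F g - dG₁ g)
          = QuotientAddGroup.mk' S (F g) - QuotientAddGroup.mk' S (dG₁ g) :=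
        map_sub _ _ _
      have h2 : QuotientAddGroup.mk' S (dG₁ g) = Fb g := congrFun hmkdG₁ g
      have h3 : QuotientAddGroup.mk' S (F g) = Fb g := rfl
      have h4 : QuotientAddGroup.mk' S (F g - dG₁ g) = 0 := by
        rw [h1, h2, h3, sub_self]
      exact (QuotientAddGroup.eq_zero_iff _).mp h4
    set HS : (Fin (n + 1) → Γ) → S := fun g => ⟨F g - dG₁ g, hmem g⟩ with hHS
    have hHScont : Continuous HS := (hF.sub hdG₁cont).subtype_mk _
    -- HS is a cocycle
    have hHSd : cochainD actS (n + 1) HS = 0 := by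
      funext g
      have h := congrFun (cochainD_comm S.subtype actS act hcommS (n + 1) HS) g
      have h2 : (fun g : Fin (n + 1) → Γ => S.subtype (HS g)) = fun g => F g - dG₁ g := rfl
      rw [h2, cochainD_sub act hsubρ (n + 1) F dG₁] at h
      have h3 : cochainD act (n + 1) F g - cochainD act (n + 1) dG₁ g = 0 := by
        rw [hdF, hdG₁]
        have h4 := congrFun (cochainD_sq ρ n G₁) g
        simp only [Pi.zero_apply] at h4 ⊢
        rw [h4, sub_zero]
      exact Subtype.ext (by simpa using h.trans h3)
    -- norm bookkeeping
    have hKc'' : (1 : ℝ≥0∞) ≤ (K : ℝ≥0∞) * (c'' : ℝ≥0∞) := by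
      have h1 : (1 : ℝ≥0∞) ≤ (K : ℝ≥0∞) := by exact_mod_cast hK
      have h2 : (1 : ℝ≥0∞) ≤ (c'' : ℝ≥0∞) := by exact_mod_cast hc''
      calc (1 : ℝ≥0∞) = 1 * 1 := (one_mul 1).symm
        _ ≤ _ := mul_le_mul' h1 h2
    have hFb_le : supNorm Fb ≤ T := iSup_le fun g => le_trans (hmkle (F g)) (le_supNorm F g)
    have hGb_le : supNorm Gb ≤ (c'' : ℝ≥0∞) * T :=
      le_trans hGbnorm (mul_le_mul_right hFb_le _)
    have hG₁_le : supNorm G₁ ≤ (K : ℝ≥0∞) * ((c'' : ℝ≥0∞) * T) := by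
      refine iSup_le fun g => le_trans (hbd' (Gb g)) ?_
      exact mul_le_mul_right (le_trans (le_supNorm Gb g) hGb_le) _
    have hdG₁_le : supNorm dG₁ ≤ (K : ℝ≥0∞) * ((c'' : ℝ≥0∞) * T) :=
      le_trans (supNorm_cochainD_le hna act hρiso n G₁) hG₁_le
    have hT_le : T ≤ (K : ℝ≥0∞) * ((c'' : ℝ≥0∞) * T) := by
      calc T = 1 * T := (one_mul T).symm
        _ ≤ ((K : ℝ≥0∞) * (c'' : ℝ≥0∞)) * T := mul_le_mul_left hKc'' T
        _ = _ := mul_assoc _ _ _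
    have hHS_le : supNorm HS ≤ (K : ℝ≥0∞) * ((c'' : ℝ≥0∞) * T) := by
      refine iSup_le fun g => ?_
      have e1 : (‖HS g‖₊ : ℝ≥0∞) = (‖F g - dG₁ g‖₊ : ℝ≥0∞) := rfl
      rw [e1, sub_eq_add_neg]
      refine le_trans (nnnorm_add_le_max hna _ _) (max_le ?_ ?_)
      · exact le_trans (le_supNorm F g) hT_le
      · rw [nnnorm_neg]
        exact le_trans (le_supNorm dG₁ g) hdG₁_le
    -- solve in S
    obtain ⟨GS, hGScont, hGSd, hGSnorm⟩ := hexactS n HS hHScont hHSd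
    have hGS_le : supNorm GS ≤ (c' : ℝ≥0∞) * ((K : ℝ≥0∞) * ((c'' : ℝ≥0∞) * T)) :=
      le_trans hGSnorm (mul_le_mul_right hHS_le _)
    -- assemble
    refine ⟨fun g => G₁ g + (GS g : V), hG₁cont.add (continuous_subtype_val.comp hGScont),
      ?_, ?_⟩
    · -- dG = F
      have hιGS : cochainD act n (fun g => (GS g : V)) = fun g => ((HS g : V)) := by
        have h := cochainD_comm S.subtype actS act hcommS n GS
        rw [hGSd] at h
        exact h.symm
      funext g
      have h1 := congrFun (cochainD_add act haddρ n G₁ (fun g => (GS g : V))) g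
      rw [h1, congrFun hιGS g]
      have h2 : ((HS g : V)) = F g - dG₁ g := rfl
      rw [h2, hdG₁]
      abel
    · -- the norm bound
      have hrhs : ((c' * K * c'' : ℝ≥0) : ℝ≥0∞) * T
          = (c' : ℝ≥0∞) * ((K : ℝ≥0∞) * ((c'' : ℝ≥0∞) * T)) := by
        push_cast
        ring
      rw [hrhs]
      refine iSup_le fun g => ?_
      refine le_trans (nnnorm_add_le_max hna _ _) (max_le ?_ ?_)
      · refine le_trans (le_trans (le_supNorm G₁ g) hG₁_le) ?_
        have h1 : (1 : ℝ≥0∞) ≤ (c' : ℝ≥0∞) := by exact_mod_cast hc'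
        calc (K : ℝ≥0∞) * ((c'' : ℝ≥0∞) * T) = 1 * ((K : ℝ≥0∞) * ((c'' : ℝ≥0∞) * T)) :=
            (one_mul _).symm
          _ ≤ _ := mul_le_mul_left h1 _
      · have e1 : (‖(GS g : V)‖₊ : ℝ≥0∞) = (‖GS g‖₊ : ℝ≥0∞) := rfl
        rw [e1]
        exact le_trans (le_supNorm GS g) hGS_le
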